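/- Let k ≥ 2 and let m_1, …, m_k be integers with m_k ≢ 0 (mod n). Then I(m_1, …, m_k) = −∑_{i=1}^{k−1} I(m_1, …, m_{i−1}, m_i + m_k, m_{i+1}, …, m_{k−1}), where on the right the i-th summand is the exponential sum with k−1 arguments obtained from (m_1,…,m_{k−1}) by replacing m_i with m_i + m_k. -/
import Mathlib


open Finset

noncomputable section

/-- The exponential sum `I(m_1, …, m_k) = ∑ exp(2πi(m_1 j_1 + … + m_k j_k)/n)`,
the sum being taken over all `k`-tuples `(j_1, …, j_k)` of pairwise distinct
elements of `ℤ/nℤ` (represented by `Fin n`). -/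
def expSum (n : ℕ) (k : ℕ) (m : Fin k → ℤ) : ℂ :=
  ∑ t ∈ Finset.univ.filter (fun t : Fin k → Fin n => Function.Injective t),
    Complex.exp (2 * Real.pi * Complex.I * (∑ i, (m i : ℂ) * ((t i : ℕ) : ℂ)) / n)

lemma expSum_zpow (n K : ℕ) (m : Fin K → ℤ) :
    expSum n K m = ∑ t ∈ Finset.univ.filter (fun t : Fin K → Fin n => Function.Injective t),
      Complex.exp (2 * Real.pi * Complex.I / n) ^ (∑ i, m i * (t i : ℕ) : ℤ) := by
  refine Finset.sum_congr rfl fun t _ => ?_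
  rw [← Complex.exp_int_mul]
  congr 1
  push_cast
  ring

lemma geom_zero (n : ℕ) (hn : n ≠ 0) (a : ℤ) (ha : ¬ (n : ℤ) ∣ a) :
    ∑ j : Fin n, Complex.exp (2 * Real.pi * Complex.I / n) ^ (a * (j : ℕ) : ℤ) = 0 := by
  set ζ : ℂ := Complex.exp (2 * Real.pi * Complex.I / n) with hζ
  have hprim := Complex.isPrimitiveRoot_exp n hn
  have hx1 : ζ ^ a ≠ 1 := fun h => ha ((hprim.zpow_eq_one_iff_dvd a).mp h)
  have hcalc : ∀ j : Fin n, ζ ^ (a * (j : ℕ) : ℤ) = (ζ ^ a) ^ (j : ℕ) := by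
    intro j
    rw [zpow_mul, zpow_natCast]
  simp_rw [hcalc]
  rw [Fin.sum_univ_eq_sum_range (fun i => (ζ ^ a) ^ i) n, geom_sum_eq hx1]
  have : (ζ ^ a) ^ n = 1 := by
    rw [← zpow_natCast, ← zpow_mul, mul_comm, zpow_mul, zpow_natCast, hprim.pow_eq_one, one_zpow]
  rw [this, sub_self, zero_div]

lemma snoc_inj {n k : ℕ} {s : Fin k → Fin n} (hs : Function.Injective s) {j : Fin n}
    (hj : ∀ i, s i ≠ j) : Function.Injective (Fin.snoc s j : Fin (k + 1) → Fin n) := by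
  intro a b hab
  induction a using Fin.lastCases with
  | last =>
    induction b using Fin.lastCases with
    | last => rfl
    | cast b =>
      rw [Fin.snoc_last, Fin.snoc_castSucc] at hab
      exact absurd hab.symm (hj b)
  | cast a =>
    induction b using Fin.lastCases with
    | last =>
      rw [Fin.snoc_last, Fin.snoc_castSucc] at hab
      exact absurd hab (hj a)
    | cast b =>
      rw [Fin.snoc_castSucc, Fin.snoc_castSucc] at hab
      exact congrArg Fin.castSucc (hs hab)

/-- If `k ≥ 2` and `m_k ≢ 0 (mod n)`, then
`I(m_1, …, m_k) = −∑_{i=1}^{k−1} I(m_1, …, m_i + m_k, …, m_{k−1})`. -/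
theorem expSum_recursion (n : ℕ) (hn : 3 ≤ n) (k : ℕ) (m : Fin (k + 2) → ℤ)
    (hm : ¬ (n : ℤ) ∣ m (Fin.last (k + 1))) :
    expSum n (k + 2) m =
      - ∑ i : Fin (k + 1),
          expSum n (k + 1)
            (Function.update (fun l : Fin (k + 1) => m l.castSucc) i
              (m i.castSucc + m (Fin.last (k + 1)))) := by
  classical
  have hn0 : n ≠ 0 := by omega
  set ζ : ℂ := Complex.exp (2 * Real.pi * Complex.I / n) with hζ
  have hζ0 : ζ ≠ 0 := Complex.exp_ne_zero _
  set Inj1 : Finset (Fin (k + 1) → Fin n) :=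
    Finset.univ.filter (fun t : Fin (k + 1) → Fin n => Function.Injective t) with hInj1
  set Inj2 : Finset (Fin (k + 2) → Fin n) :=
    Finset.univ.filter (fun t : Fin (k + 2) → Fin n => Function.Injective t) with hInj2
  set M : (Fin (k + 2) → Fin n) → ℤ := fun t => ∑ i, m i * (t i : ℕ) with hM
  -- exponent of a snoc
  have hMsnoc : ∀ (s : Fin (k + 1) → Fin n) (j : Fin n),
      M (Fin.snoc s j) = (∑ l, m l.castSucc * (s l : ℕ)) + m (Fin.last (k + 1)) * (j : ℕ) := by
    intro s j
    simp only [hM]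
    conv_lhs => rw [Fin.sum_univ_castSucc]
    simp only [Fin.snoc_castSucc, Fin.snoc_last]
  -- key zero identity
  have h0 : ∑ s ∈ Inj1, ∑ j : Fin n, ζ ^ (M (Fin.snoc s j)) = 0 := by
    refine Finset.sum_eq_zero fun s _ => ?_
    have : ∀ j : Fin n, ζ ^ (M (Fin.snoc s j)) =
        ζ ^ (∑ l, m l.castSucc * (s l : ℕ)) * ζ ^ (m (Fin.last (k + 1)) * (j : ℕ) : ℤ) := by
      intro j
      rw [hMsnoc, zpow_add₀ hζ0]
    simp_rw [this]
    rw [← Finset.mul_sum, geom_zero n hn0 _ hm, mul_zero]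
  -- split inner sum
  have hsplit : ∀ s ∈ Inj1, ∑ j : Fin n, ζ ^ (M (Fin.snoc s j)) =
      (∑ j ∈ (Finset.univ.image s)ᶜ, ζ ^ (M (Fin.snoc s j)))
        + ∑ i : Fin (k + 1), ζ ^ (M (Fin.snoc s (s i))) := by
    intro s hs
    have hsinj : Function.Injective s := (Finset.mem_filter.mp hs).2
    rw [← Finset.sum_add_sum_compl (Finset.univ.image s), add_comm]
    congr 1
    rw [Finset.sum_image (fun a _ b _ h => hsinj h)]
  -- piece 2 equals expSum m
  have hpiece2 : ∑ s ∈ Inj1, ∑ j ∈ (Finset.univ.image s)ᶜ, ζ ^ (M (Fin.snoc s j)) =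
      expSum n (k + 2) m := by
    rw [expSum_zpow]
    rw [Finset.sum_sigma']
    refine Finset.sum_nbij' (fun p => Fin.snoc p.1 p.2) (fun t => ⟨Fin.init t, t (Fin.last _)⟩)
      ?_ ?_ ?_ ?_ ?_
    · rintro ⟨s, j⟩ hp
      rw [Finset.mem_sigma] at hp
      obtain ⟨hs, hj⟩ := hp
      rw [Finset.mem_compl, Finset.mem_image] at hj
      push_neg at hj
      exact Finset.mem_filter.mpr ⟨Finset.mem_univ _,
        snoc_inj (Finset.mem_filter.mp hs).2 (fun i => hj i (Finset.mem_univ i))⟩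
    · intro t ht
      have htinj : Function.Injective t := (Finset.mem_filter.mp ht).2
      rw [Finset.mem_sigma]
      constructor
      · refine Finset.mem_filter.mpr ⟨Finset.mem_univ _, ?_⟩
        intro a b hab
        have := htinj (show t a.castSucc = t b.castSucc from hab)
        exact Fin.castSucc_injective _ this
      · rw [Finset.mem_compl, Finset.mem_image]
        push_neg
        intro i _
        intro h
        have := htinj (show t i.castSucc = t (Fin.last _) from h)
        exact absurd this (Fin.castSucc_lt_last i).ne
    · rintro ⟨s, j⟩ _
      simp [Fin.init_snoc, Fin.snoc_last]
    · intro t _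
      exact Fin.snoc_init_self t
    · rintro ⟨s, j⟩ _
      rfl
  -- piece 1 equals sum of updates
  have hpiece1 : ∑ s ∈ Inj1, ∑ i : Fin (k + 1), ζ ^ (M (Fin.snoc s (s i))) =
      ∑ i : Fin (k + 1), expSum n (k + 1)
        (Function.update (fun l : Fin (k + 1) => m l.castSucc) i
          (m i.castSucc + m (Fin.last (k + 1)))) := by
    rw [Finset.sum_comm]
    refine Finset.sum_congr rfl fun i _ => ?_
    rw [expSum_zpow]
    refine Finset.sum_congr rfl fun s _ => ?_
    congr 1
    rw [hMsnoc]
    have : ∀ l : Fin (k + 1),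
        (Function.update (fun l : Fin (k + 1) => m l.castSucc) i
          (m i.castSucc + m (Fin.last (k + 1))) l) * ((s l : ℕ) : ℤ) =
        m l.castSucc * (s l : ℕ) +
          (if l = i then m (Fin.last (k + 1)) * ((s i : ℕ) : ℤ) else 0) := by
      intro l
      rcases eq_or_ne l i with h | h
      · subst h
        rw [Function.update_self, if_pos rfl]
        ring
      · rw [Function.update_of_ne h, if_neg h, add_zero]
    rw [Finset.sum_congr rfl (fun l _ => this l), Finset.sum_add_distrib,
      Finset.sum_ite_eq' Finset.univ i
        (fun _ => m (Fin.last (k + 1)) * ((s i : ℕ) : ℤ)), if_pos (Finset.mem_univ i)]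
  -- combine
  have := h0
  rw [Finset.sum_congr rfl hsplit, Finset.sum_add_distrib, hpiece2, hpiece1] at this
  exact eq_neg_of_add_eq_zero_left (by linear_combination this)
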